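/- Let Λ be a row-finite strongly aperiodic k-graph with no sources, and β : Λ^∞ → χ_Λ the map β(x) = {v ∈ Λ^0 : vΛx(n,n) ≠ ∅ for some n ∈ ℕ^k}. Then for every μ ∈ Λ, the image β(Z(μ)) of the cylinder set Z(μ) equals S(s(μ)) = {χ ∈ χ_Λ : s(μ) ∈ χ}. In particular β is an open map for the cylinder topology on Λ^∞ and the topology on χ_Λ generated by the sets S(v). -/

import Mathlib

set_option autoImplicit false

open scoped Classical

/-- A `k`-graph: a countable small category together with a degree functor
`d : Λ → ℕ^k` satisfying the unique factorization property.  Paths (morphisms)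
form a single type; vertices (objects) are identified with the paths of
degree `0`. -/
structure KGraph (k : ℕ) where
  /-- the type of paths (morphisms) of the `k`-graph -/
  Path : Type
  countable : Countable Path
  nonempty : Nonempty Path
  /-- the range (codomain) vertex of a path -/
  r : Path → Path
  /-- the source (domain) vertex of a path -/
  s : Path → Path
  /-- composition: `comp lam mu` is the path `λμ`, meaningful when `s lam = r mu` -/
  comp : Path → Path → Path
  /-- the degree functor -/
  d : Path → Fin k → ℕ
  d_r : ∀ lam, d (r lam) = 0
  d_s : ∀ lam, d (s lam) = 0
  r_r : ∀ lam, r (r lam) = r lam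
  s_r : ∀ lam, s (r lam) = r lam
  r_s : ∀ lam, r (s lam) = s lam
  s_s : ∀ lam, s (s lam) = s lam
  id_comp : ∀ lam, comp (r lam) lam = lam
  comp_id : ∀ lam, comp lam (s lam) = lam
  r_comp : ∀ lam mu, s lam = r mu → r (comp lam mu) = r lam
  s_comp : ∀ lam mu, s lam = r mu → s (comp lam mu) = s mu
  d_comp : ∀ lam mu, s lam = r mu → d (comp lam mu) = d lam + d mu
  comp_assoc : ∀ lam mu nu, s lam = r mu → s mu = r nu →
    comp (comp lam mu) nu = comp lam (comp mu nu)
  /-- the unique factorization property -/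
  factor : ∀ lam (m n : Fin k → ℕ), d lam = m + n →
    ∃! p : Path × Path, s p.1 = r p.2 ∧ comp p.1 p.2 = lam ∧ d p.1 = m ∧ d p.2 = n

namespace KGraph

variable {k : ℕ}

/-- `v` is a vertex, i.e. an element of `Λ⁰`. -/
def IsVertex (Λ : KGraph k) (v : Λ.Path) : Prop := Λ.d v = 0

/-- `v ≤ w`, i.e. `vΛw ≠ ∅`. -/
def Conn (Λ : KGraph k) (v w : Λ.Path) : Prop := ∃ lam, Λ.r lam = v ∧ Λ.s lam = w

/-- the canonical generator `e i` of `ℕ^k`. -/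
def eVec (k : ℕ) (i : Fin k) : Fin k → ℕ := Pi.single i 1

/-- `Λ` is row-finite: `vΛⁿ` is finite for every vertex `v` and `n ∈ ℕ^k`. -/
def RowFinite (Λ : KGraph k) : Prop :=
  ∀ v, Λ.IsVertex v → ∀ n : Fin k → ℕ, {lam | Λ.r lam = v ∧ Λ.d lam = n}.Finite

/-- `Λ` has no sources: `vΛ^{e i} ≠ ∅` for every vertex `v` and `i`. -/
def NoSources (Λ : KGraph k) : Prop :=
  ∀ v, Λ.IsVertex v → ∀ i : Fin k, ∃ lam, Λ.r lam = v ∧ Λ.d lam = eVec k i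

/-- the middle factor `λ(m,n)`: the unique `σ` such that `λ = μστ` with
`d μ = m`, `d σ = n - m`, `d τ = d λ - n` (junk value if no factorization exists). -/
noncomputable def seg (Λ : KGraph k) (lam : Λ.Path) (m n : Fin k → ℕ) : Λ.Path :=
  if h : ∃ sig, ∃ mu tau, Λ.s mu = Λ.r sig ∧ Λ.s sig = Λ.r tau ∧
      Λ.comp (Λ.comp mu sig) tau = lam ∧ Λ.d mu = m ∧ Λ.d sig = n - m ∧
      Λ.d tau = Λ.d lam - n
  then h.choose else lam

/-- `Λ` has no local periodicity at the vertex `v`. -/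
def NoLocalPeriodicity (Λ : KGraph k) (v : Λ.Path) : Prop :=
  ∀ m n : Fin k → ℕ, m ≠ n →
    ∃ lam, Λ.r lam = v ∧ m ⊔ n ≤ Λ.d lam ∧
      Λ.seg lam m (m + Λ.d lam - (m ⊔ n)) ≠ Λ.seg lam n (n + Λ.d lam - (m ⊔ n))

/-- `Λ` is aperiodic: no vertex has local periodicity. -/
def Aperiodic (Λ : KGraph k) : Prop := ∀ v, Λ.IsVertex v → Λ.NoLocalPeriodicity v

/-- a hereditary set of vertices -/
def Hereditary (Λ : KGraph k) (H : Set Λ.Path) : Prop :=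
  ∀ v ∈ H, ∀ w, Λ.Conn v w → w ∈ H

/-- a saturated set of vertices -/
def Saturated (Λ : KGraph k) (H : Set Λ.Path) : Prop :=
  ∀ v, Λ.IsVertex v → (∃ mu, Λ.r mu = v) →
    (∃ i : Fin k, ∀ lam, Λ.r lam = v → Λ.d lam = eVec k i → Λ.s lam ∈ H) → v ∈ H

/-- the saturation of a set of vertices: the smallest saturated set containing it -/
def saturation (Λ : KGraph k) (H : Set Λ.Path) : Set Λ.Path :=
  ⋂₀ {K : Set Λ.Path | H ⊆ K ∧ Λ.Saturated K}

/-- no local periodicity at the vertex `v` of the quotient graph `Γ(Λ \ H)`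
(whose paths are the paths of `Λ` with source outside `H`). -/
def QuotNoLocalPeriodicity (Λ : KGraph k) (H : Set Λ.Path) (v : Λ.Path) : Prop :=
  ∀ m n : Fin k → ℕ, m ≠ n →
    ∃ lam, Λ.r lam = v ∧ Λ.s lam ∉ H ∧ m ⊔ n ≤ Λ.d lam ∧
      Λ.seg lam m (m + Λ.d lam - (m ⊔ n)) ≠ Λ.seg lam n (n + Λ.d lam - (m ⊔ n))

/-- `Λ` is strongly aperiodic: `Γ(Λ \ H)` is aperiodic for every saturated
hereditary proper subset `H ⊊ Λ⁰`. -/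
def StronglyAperiodic (Λ : KGraph k) : Prop :=
  ∀ H : Set Λ.Path, (∀ v ∈ H, Λ.IsVertex v) → Λ.Hereditary H → Λ.Saturated H →
    H ≠ {v | Λ.IsVertex v} →
    ∀ v, Λ.IsVertex v → v ∉ H → Λ.QuotNoLocalPeriodicity H v

/-- a maximal tail -/
def MaximalTail (Λ : KGraph k) (γ : Set Λ.Path) : Prop :=
  γ.Nonempty ∧ (∀ v ∈ γ, Λ.IsVertex v) ∧
  (∀ v₁ ∈ γ, ∀ v₂ ∈ γ, ∃ w ∈ γ, Λ.Conn v₁ w ∧ Λ.Conn v₂ w) ∧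
  (∀ v ∈ γ, ∀ i : Fin k, ∃ f, Λ.r f = v ∧ Λ.d f = eVec k i ∧ Λ.s f ∈ γ) ∧
  (∀ v, Λ.IsVertex v → ∀ w ∈ γ, Λ.Conn v w → v ∈ γ)

end KGraph

namespace KGraph

variable {k : ℕ}

/-- An infinite path in `Λ`: a degree-preserving functor `x : Ω_k → Λ`,
recorded by its values `x(m,n)` for `m ≤ n` in `ℕ^k`. -/
structure InfinitePath (Λ : KGraph k) where
  toFun : (Fin k → ℕ) → (Fin k → ℕ) → Λ.Path
  d_eq : ∀ m n : Fin k → ℕ, m ≤ n → Λ.d (toFun m n) = n - m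
  r_eq : ∀ m n : Fin k → ℕ, m ≤ n → Λ.r (toFun m n) = toFun m m
  s_eq : ∀ m n : Fin k → ℕ, m ≤ n → Λ.s (toFun m n) = toFun n n
  comp_eq : ∀ m n p : Fin k → ℕ, m ≤ n → n ≤ p →
    Λ.comp (toFun m n) (toFun n p) = toFun m p

/-- `β(x) = {v ∈ Λ⁰ : vΛx(n,n) ≠ ∅ for some n ∈ ℕ^k}`. -/
def tailOf (Λ : KGraph k) (x : Λ.InfinitePath) : Set Λ.Path :=
  {v | Λ.IsVertex v ∧ ∃ n : Fin k → ℕ, Λ.Conn v (x.toFun n n)}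

/-- the cylinder set `Z(μ) = {x ∈ Λ^∞ : x(0, d(μ)) = μ}`. -/
def cyl (Λ : KGraph k) (mu : Λ.Path) : Set Λ.InfinitePath :=
  {x | x.toFun 0 (Λ.d mu) = mu}

/-- the topology on `Λ^∞` generated by the cylinder sets -/
instance instTopInfinitePath (Λ : KGraph k) : TopologicalSpace Λ.InfinitePath :=
  TopologicalSpace.generateFrom {U | ∃ mu : Λ.Path, U = Λ.cyl mu}

/-- `χ_Λ`, the set of maximal tails of `Λ` -/
def MaxTail (Λ : KGraph k) : Type := {γ : Set Λ.Path // Λ.MaximalTail γ}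

/-- `S(v) = {χ ∈ χ_Λ : v ∈ χ}`. -/
def Sv (Λ : KGraph k) (v : Λ.Path) : Set Λ.MaxTail := {χ | v ∈ χ.1}

/-- the topology on `χ_Λ` generated by the sets `S(v)`, `v ∈ Λ⁰` -/
instance instTopMaxTail (Λ : KGraph k) : TopologicalSpace Λ.MaxTail :=
  TopologicalSpace.generateFrom {U | ∃ v, Λ.IsVertex v ∧ U = Λ.Sv v}

end KGraph

namespace KGraph

variable {k : ℕ} (Λ : KGraph k)

theorem vertex_eq {v : Λ.Path} (hv : Λ.d v = 0) : Λ.r v = v ∧ Λ.s v = v := by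
  obtain ⟨p, _, hu⟩ := Λ.factor v 0 0 (by simp [hv])
  have h1 : ((Λ.r v, v) : Λ.Path × Λ.Path) = p :=
    hu _ ⟨Λ.s_r v, Λ.id_comp v, Λ.d_r v, hv⟩
  have h2 : ((v, Λ.s v) : Λ.Path × Λ.Path) = p :=
    hu _ ⟨(Λ.r_s v).symm, Λ.comp_id v, hv, Λ.d_s v⟩
  have := h1.trans h2.symm
  exact ⟨(congrArg Prod.fst this), (congrArg Prod.snd this).symm⟩

/-- the degree-`m` prefix of `lam` together with the rest -/
noncomputable def split (lam : Λ.Path) (m : Fin k → ℕ) : Λ.Path × Λ.Path :=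
  if h : m ≤ Λ.d lam then
    (Λ.factor lam m (Λ.d lam - m)
      (by funext i; exact (Nat.add_sub_cancel' (h i)).symm)).exists.choose
  else (lam, lam)

theorem split_spec {lam : Λ.Path} {m : Fin k → ℕ} (h : m ≤ Λ.d lam) :
    Λ.s (Λ.split lam m).1 = Λ.r (Λ.split lam m).2 ∧
    Λ.comp (Λ.split lam m).1 (Λ.split lam m).2 = lam ∧
    Λ.d (Λ.split lam m).1 = m ∧ Λ.d (Λ.split lam m).2 = Λ.d lam - m := by
  have hpf : Λ.d lam = m + (Λ.d lam - m) := by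
    funext i; exact (Nat.add_sub_cancel' (h i)).symm
  rw [split, dif_pos h]
  exact (Λ.factor lam m (Λ.d lam - m) hpf).exists.choose_spec

theorem split_eq {lam a b : Λ.Path} {m : Fin k → ℕ} (h : m ≤ Λ.d lam)
    (h1 : Λ.s a = Λ.r b) (h2 : Λ.comp a b = lam) (h3 : Λ.d a = m) :
    Λ.split lam m = (a, b) := by
  have hpf : Λ.d lam = m + (Λ.d lam - m) := by
    funext i; exact (Nat.add_sub_cancel' (h i)).symm
  have hd : Λ.d lam = Λ.d a + Λ.d b := h2 ▸ Λ.d_comp a b h1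
  have hb : Λ.d b = Λ.d lam - m := by
    funext i
    have e1 := congrFun hd i
    have e2 := congrFun h3 i
    simp only [Pi.add_apply, Pi.sub_apply] at *
    omega
  obtain ⟨hs1, hc1, hd1, hd2⟩ := Λ.split_spec h
  exact (Λ.factor lam m (Λ.d lam - m) hpf).unique ⟨hs1, hc1, hd1, hd2⟩ ⟨h1, h2, h3, hb⟩

theorem split_comp {mu tau : Λ.Path} {m : Fin k → ℕ} (hst : Λ.s mu = Λ.r tau)
    (h : m ≤ Λ.d mu) :
    Λ.split (Λ.comp mu tau) m = ((Λ.split mu m).1, Λ.comp (Λ.split mu m).2 tau) := by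
  obtain ⟨hs1, hc1, hd1, hd2⟩ := Λ.split_spec h
  have hsmu : Λ.s mu = Λ.s (Λ.split mu m).2 := by
    have := Λ.s_comp _ _ hs1
    rw [hc1] at this
    exact this
  have hsb : Λ.s (Λ.split mu m).2 = Λ.r tau := by rw [← hsmu]; exact hst
  apply Λ.split_eq
  · intro i
    rw [Λ.d_comp mu tau hst]
    exact le_trans (h i) (by simp)
  · rw [Λ.r_comp _ _ hsb]; exact hs1
  · rw [← Λ.comp_assoc _ _ _ hs1 hsb, hc1]
  · exact hd1

theorem conn_trans {v w u : Λ.Path} (h1 : Λ.Conn v w) (h2 : Λ.Conn w u) : Λ.Conn v u := by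
  obtain ⟨a, ha1, ha2⟩ := h1
  obtain ⟨b, hb1, hb2⟩ := h2
  exact ⟨Λ.comp a b, by rw [Λ.r_comp a b (ha2.trans hb1.symm)]; exact ha1,
    by rw [Λ.s_comp a b (ha2.trans hb1.symm)]; exact hb2⟩

theorem conn_self {v : Λ.Path} (hv : Λ.d v = 0) : Λ.Conn v v :=
  ⟨v, (Λ.vertex_eq hv).1, (Λ.vertex_eq hv).2⟩

end KGraph
namespace KGraph

variable {k : ℕ} (Λ : KGraph k)

section Chain

variable (g : ℕ → Λ.Path)

/-- the chain `g` is a chain of prefixes -/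
def IsChain : Prop := ∀ j, ∃ tau, Λ.s (g j) = Λ.r tau ∧ g (j+1) = Λ.comp (g j) tau

variable (hub : ∀ n : Fin k → ℕ, ∃ j, n ≤ Λ.d (g j))

theorem chain_pre (hpre : IsChain Λ g) {i j : ℕ} (hij : i ≤ j) :
    ∃ tau, Λ.s (g i) = Λ.r tau ∧ g j = Λ.comp (g i) tau := by
  induction j, hij using Nat.le_induction with
  | base => exact ⟨Λ.s (g i), (Λ.r_s _).symm, (Λ.comp_id _).symm⟩
  | succ j hij ih =>
    obtain ⟨tau, h1, h2⟩ := ih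
    obtain ⟨sg, h3, h4⟩ := hpre j
    have hts : Λ.s tau = Λ.r sg := by
      rw [h2] at h3
      rw [← Λ.s_comp _ _ h1]; exact h3
    refine ⟨Λ.comp tau sg, ?_, ?_⟩
    · rw [Λ.r_comp _ _ hts]; exact h1
    · rw [h4, h2, Λ.comp_assoc _ _ _ h1 hts]

/-- the degree-`n` prefix of the "limit" of the chain `g` -/
noncomputable def chainPre (n : Fin k → ℕ) : Λ.Path :=
  (Λ.split (g (hub n).choose) n).1

theorem chainPre_eq (hpre : IsChain Λ g) {n : Fin k → ℕ} {j : ℕ} (h : n ≤ Λ.d (g j)) :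
    chainPre Λ g hub n = (Λ.split (g j) n).1 := by
  have h0 : n ≤ Λ.d (g (hub n).choose) := (hub n).choose_spec
  have key : ∀ i, n ≤ Λ.d (g i) → ∀ J, i ≤ J → (Λ.split (g J) n).1 = (Λ.split (g i) n).1 := by
    intro i hi J hJ
    obtain ⟨tau, h1, h2⟩ := chain_pre Λ g hpre hJ
    rw [h2, Λ.split_comp h1 hi]
  calc chainPre Λ g hub n = (Λ.split (g (max j (hub n).choose)) n).1 :=
        (key _ h0 _ (le_max_right _ _)).symm
    _ = (Λ.split (g j) n).1 := key _ h _ (le_max_left _ _)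

theorem chainPre_d (n : Fin k → ℕ) : Λ.d (chainPre Λ g hub n) = n :=
  (Λ.split_spec (hub n).choose_spec).2.2.1

theorem chainPre_le {m n : Fin k → ℕ} (h : m ≤ n) :
    m ≤ Λ.d (chainPre Λ g hub n) := by
  rw [chainPre_d]; exact h

theorem split_pre_self (n : Fin k → ℕ) :
    Λ.split (chainPre Λ g hub n) n = (chainPre Λ g hub n, Λ.s (chainPre Λ g hub n)) :=
  Λ.split_eq (chainPre_le Λ g hub le_rfl) (Λ.r_s _).symm (Λ.comp_id _) (chainPre_d Λ g hub n)

theorem split_pre_zero (n : Fin k → ℕ) :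
    Λ.split (chainPre Λ g hub n) 0 = (Λ.r (chainPre Λ g hub n), chainPre Λ g hub n) :=
  Λ.split_eq (chainPre_le Λ g hub (show (0 : Fin k → ℕ) ≤ n from zero_le)) (Λ.s_r _) (Λ.id_comp _) (Λ.d_r _)

theorem chainPre_index (hpre : IsChain Λ g) (j : ℕ) :
    chainPre Λ g hub (Λ.d (g j)) = g j := by
  rw [chainPre_eq Λ g hub hpre (le_refl (Λ.d (g j))),
    Λ.split_eq le_rfl (Λ.r_s _).symm (Λ.comp_id _) rfl]

theorem chainPre_source (hpre : IsChain Λ g) {n : Fin k → ℕ} {j : ℕ}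
    (h : n ≤ Λ.d (g j)) :
    Λ.Conn (Λ.s (chainPre Λ g hub n)) (Λ.s (g j)) := by
  have e : chainPre Λ g hub n = (Λ.split (g j) n).1 := chainPre_eq Λ g hub hpre h
  obtain ⟨hs, hc, hd1, hd2⟩ := Λ.split_spec h
  refine ⟨(Λ.split (g j) n).2, by rw [← e] at hs; exact hs.symm, ?_⟩
  have e2 := Λ.s_comp _ _ hs
  rw [hc] at e2
  exact e2.symm

theorem chainPre_prefix (hpre : IsChain Λ g) {m n : Fin k → ℕ} (h : m ≤ n) :
    (Λ.split (chainPre Λ g hub n) m).1 = chainPre Λ g hub m := by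
  have h0 : n ≤ Λ.d (g (hub n).choose) := (hub n).choose_spec
  have e : chainPre Λ g hub n = (Λ.split (g (hub n).choose) n).1 := rfl
  obtain ⟨hs, hc, hd1, hd2⟩ := Λ.split_spec h0
  rw [← e] at hs hc
  rw [chainPre_eq Λ g hub hpre (le_trans h h0), ← hc,
    Λ.split_comp hs (chainPre_le Λ g hub h)]

/-- the value `x(m,n)` of the limit infinite path of the chain `g` -/
noncomputable def chainFun (m n : Fin k → ℕ) : Λ.Path :=
  if m ≤ n then (Λ.split (chainPre Λ g hub n) m).2 else g 0

theorem chainFun_eq {m n : Fin k → ℕ} (h : m ≤ n) :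
    chainFun Λ g hub m n = (Λ.split (chainPre Λ g hub n) m).2 := if_pos h

theorem chainFun_diag (n : Fin k → ℕ) :
    chainFun Λ g hub n n = Λ.s (chainPre Λ g hub n) := by
  rw [chainFun_eq Λ g hub le_rfl, split_pre_self]

theorem chainFun_zero (n : Fin k → ℕ) :
    chainFun Λ g hub 0 n = chainPre Λ g hub n := by
  rw [chainFun_eq Λ g hub (show (0 : Fin k → ℕ) ≤ n from zero_le), split_pre_zero]

/-- the limit infinite path of the chain `g` -/
noncomputable def limitPath (hpre : IsChain Λ g) : Λ.InfinitePath where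
  toFun := chainFun Λ g hub
  d_eq m n h := by
    rw [chainFun_eq Λ g hub h, (Λ.split_spec (chainPre_le Λ g hub h)).2.2.2,
      chainPre_d]
  r_eq m n h := by
    obtain ⟨hs, hc, hd1, hd2⟩ := Λ.split_spec (chainPre_le Λ g hub h)
    rw [chainFun_eq Λ g hub h, chainFun_diag, ← hs,
      chainPre_prefix Λ g hub hpre h]
  s_eq m n h := by
    obtain ⟨hs, hc, hd1, hd2⟩ := Λ.split_spec (chainPre_le Λ g hub h)
    have e := Λ.s_comp _ _ hs
    rw [hc] at e
    rw [chainFun_eq Λ g hub h, chainFun_diag]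
    exact e.symm
  comp_eq m n p hmn hnp := by
    obtain ⟨hsA, hcA, hdA1, hdA2⟩ := Λ.split_spec (chainPre_le Λ g hub hnp)
    obtain ⟨hsB, hcB, hdB1, hdB2⟩ := Λ.split_spec (chainPre_le Λ g hub hmn)
    rw [chainPre_prefix Λ g hub hpre hnp] at hsA hcA hdA1
    rw [chainPre_prefix Λ g hub hpre hmn] at hsB hcB hdB1
    set A := (Λ.split (chainPre Λ g hub p) n).2 with hA
    set B := (Λ.split (chainPre Λ g hub n) m).2 with hB
    have hsBA : Λ.s B = Λ.r A := by
      have e1 := Λ.s_comp _ _ hsB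
      rw [hcB] at e1
      rw [← e1]
      exact hsA.symm ▸ rfl
    have hcomp : Λ.comp (chainPre Λ g hub m) (Λ.comp B A) = chainPre Λ g hub p := by
      rw [← Λ.comp_assoc _ _ _ hsB hsBA, hcB, hcA]
    have hsr : Λ.s (chainPre Λ g hub m) = Λ.r (Λ.comp B A) := by
      rw [Λ.r_comp _ _ hsBA]; exact hsB
    have hkey : Λ.split (chainPre Λ g hub p) m = (chainPre Λ g hub m, Λ.comp B A) :=
      Λ.split_eq (chainPre_le Λ g hub (le_trans hmn hnp)) hsr hcomp (chainPre_d Λ g hub m)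
    rw [chainFun_eq Λ g hub hmn, chainFun_eq Λ g hub hnp,
      chainFun_eq Λ g hub (le_trans hmn hnp), hkey]

theorem limitPath_toFun (hpre : IsChain Λ g) :
    (limitPath Λ g hub hpre).toFun = chainFun Λ g hub := rfl

end Chain

end KGraph
namespace KGraph

variable {k : ℕ} (Λ : KGraph k)

theorem sum_eVec (i : Fin k) : ∑ j, eVec k i j = 1 := by
  simp [eVec, Finset.sum_pi_single']

theorem tail_reach {γ : Set Λ.Path} (ht : Λ.MaximalTail γ) (n : Fin k → ℕ) :
    ∀ v ∈ γ, ∃ σ, Λ.r σ = v ∧ Λ.s σ ∈ γ ∧ Λ.d σ = n := by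
  obtain ⟨hne, hvert, hconn, hext, hdown⟩ := ht
  suffices H : ∀ N : ℕ, ∀ n : Fin k → ℕ, (∑ i, n i) = N → ∀ v ∈ γ,
      ∃ σ, Λ.r σ = v ∧ Λ.s σ ∈ γ ∧ Λ.d σ = n from H _ n rfl
  intro N
  induction N with
  | zero =>
    intro n hn v hv
    have hn0 : n = 0 := by
      funext i
      exact Finset.sum_eq_zero_iff.mp hn i (Finset.mem_univ i)
    have hv0 : Λ.d v = 0 := hvert v hv
    refine ⟨v, (Λ.vertex_eq hv0).1, ?_, by rw [hv0, hn0]⟩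
    rw [(Λ.vertex_eq hv0).2]; exact hv
  | succ N ih =>
    intro n hn v hv
    have hi : ∃ i, n i ≠ 0 := by
      by_contra hcon
      push_neg at hcon
      simp only [Finset.sum_congr rfl fun i _ => hcon i, Finset.sum_const_zero] at hn
      omega
    obtain ⟨i, hi⟩ := hi
    set n' := n - eVec k i with hn'
    have hsplit : n = eVec k i + n' := by
      funext j
      simp only [hn', Pi.add_apply, Pi.sub_apply, eVec, Pi.single_apply]
      by_cases hj : j = i
      · subst hj; simp only [if_true, eq_self_iff_true]; omega
      · simp [hj]
    have hsum' : ∑ j, n' j = N := by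
      have e : ∑ j, n j = ∑ j, (eVec k i + n') j := by rw [← hsplit]
      simp only [Pi.add_apply, Finset.sum_add_distrib, sum_eVec] at e
      omega
    obtain ⟨f, hf1, hf2, hf3⟩ := hext v hv i
    obtain ⟨σ', h1, h2, h3⟩ := ih n' hsum' (Λ.s f) hf3
    have hcomp : Λ.s f = Λ.r σ' := h1.symm
    refine ⟨Λ.comp f σ', ?_, ?_, ?_⟩
    · rw [Λ.r_comp _ _ hcomp]; exact hf1
    · rw [Λ.s_comp _ _ hcomp]; exact h2
    · rw [Λ.d_comp _ _ hcomp, hf2, h3, ← hsplit]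

theorem tail_step {γ : Set Λ.Path} (ht : Λ.MaximalTail γ) {w p : Λ.Path}
    (hw : w ∈ γ) (hp : Λ.s p ∈ γ) :
    ∃ q, (∃ τ, Λ.s p = Λ.r τ ∧ q = Λ.comp p τ) ∧ Λ.s q ∈ γ ∧
      Λ.d p + 1 ≤ Λ.d q ∧ Λ.Conn w (Λ.s q) := by
  obtain ⟨u, hu, hcu1, hcu2⟩ := ht.2.2.1 (Λ.s p) hp w hw
  obtain ⟨τ₁, ht1, ht2⟩ := hcu1
  obtain ⟨σ, hσ1, hσ2, hσ3⟩ := Λ.tail_reach ht 1 u hu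
  have h12 : Λ.s τ₁ = Λ.r σ := by rw [ht2, hσ1]
  have hpt : Λ.s p = Λ.r (Λ.comp τ₁ σ) := by rw [Λ.r_comp _ _ h12, ht1]
  refine ⟨Λ.comp p (Λ.comp τ₁ σ), ⟨Λ.comp τ₁ σ, hpt, rfl⟩, ?_, ?_, ?_⟩
  · rw [Λ.s_comp _ _ hpt, Λ.s_comp _ _ h12]; exact hσ2
  · intro i
    rw [Λ.d_comp _ _ hpt, Λ.d_comp _ _ h12, hσ3]
    simp only [Pi.add_apply, Pi.one_apply]
    omega
  · have hsq : Λ.s (Λ.comp p (Λ.comp τ₁ σ)) = Λ.s σ := by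
      rw [Λ.s_comp _ _ hpt, Λ.s_comp _ _ h12]
    rw [hsq]
    exact Λ.conn_trans hcu2 ⟨σ, hσ1, rfl⟩

theorem ipath_split (x : Λ.InfinitePath) {m n : Fin k → ℕ} (h : m ≤ n) :
    Λ.split (x.toFun 0 n) m = (x.toFun 0 m, x.toFun m n) := by
  apply Λ.split_eq
  · rw [x.d_eq 0 n zero_le]; simpa using h
  · rw [x.s_eq 0 m zero_le, x.r_eq m n h]
  · exact x.comp_eq 0 m n zero_le h
  · rw [x.d_eq 0 m zero_le]; simp

end KGraph
theorem KGraph.image_cyl {k : ℕ} (Λ : KGraph k) (B : Λ.InfinitePath → Λ.MaxTail)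
    (hB : ∀ x, (B x).1 = Λ.tailOf x) (mu : Λ.Path) :
    B '' (Λ.cyl mu) = Λ.Sv (Λ.s mu) := by
  ext χ
  constructor
  · rintro ⟨x, hx, rfl⟩
    show Λ.s mu ∈ (B x).1
    rw [hB]
    refine ⟨Λ.d_s mu, Λ.d mu, ?_⟩
    have e := x.s_eq 0 (Λ.d mu) zero_le
    rw [hx] at e
    rw [← e]
    exact Λ.conn_self (Λ.d_s mu)
  · intro hχ
    obtain ⟨hne, hvert, hconn, hext, hdown⟩ := χ.2
    haveI := Λ.countable
    obtain ⟨f, hf⟩ := (Set.to_countable χ.1).exists_eq_range ⟨_, hχ⟩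
    have hfmem : ∀ j, f j ∈ χ.1 := by
      intro j; rw [hf]; exact Set.mem_range_self j
    have hstep : ∀ (j : ℕ) (p : Λ.Path), Λ.s p ∈ χ.1 →
        ∃ q, (∃ τ, Λ.s p = Λ.r τ ∧ q = Λ.comp p τ) ∧ Λ.s q ∈ χ.1 ∧
          Λ.d p + 1 ≤ Λ.d q ∧ Λ.Conn (f j) (Λ.s q) :=
      fun j p hp => Λ.tail_step χ.2 (hfmem j) hp
    choose! q hq1 hq2 hq3 hq4 using hstep
    set g : ℕ → Λ.Path := fun j => Nat.rec mu (fun j p => q j p) j with hgdef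
    have hγs : ∀ j, Λ.s (g j) ∈ χ.1 := by
      intro j
      induction j with
      | zero => exact hχ
      | succ j ih => exact hq2 j (g j) ih
    have hch : Λ.IsChain g := by
      intro j
      obtain ⟨τ, h1, h2⟩ := hq1 j (g j) (hγs j)
      exact ⟨τ, h1, h2⟩
    have hub : ∀ n : Fin k → ℕ, ∃ j, n ≤ Λ.d (g j) := by
      intro n
      have hmono : ∀ j i, j ≤ Λ.d (g j) i := by
        intro j
        induction j with
        | zero => intro i; exact Nat.zero_le _
        | succ j ih =>
          intro i
          have hgr := hq3 j (g j) (hγs j) i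
          simp only [Pi.add_apply, Pi.one_apply] at hgr
          exact le_trans (Nat.succ_le_succ (ih i)) hgr
      exact ⟨Finset.univ.sup n, fun i => le_trans (Finset.le_sup (Finset.mem_univ i)) (hmono _ i)⟩
    refine ⟨Λ.limitPath g hub hch, ?_, ?_⟩
    · show KGraph.chainFun Λ g hub 0 (Λ.d mu) = mu
      rw [KGraph.chainFun_zero]
      exact KGraph.chainPre_index Λ g hub hch 0
    · have htail : Λ.tailOf (Λ.limitPath g hub hch) = χ.1 := by
        ext v
        constructor
        · rintro ⟨hver, n, hconnv⟩
          have e : (Λ.limitPath g hub hch).toFun n n = Λ.s (KGraph.chainPre Λ g hub n) :=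
            KGraph.chainFun_diag Λ g hub n
          rw [e] at hconnv
          have hvγ : Λ.s (KGraph.chainPre Λ g hub n) ∈ χ.1 := by
            obtain ⟨j, hj⟩ := hub n
            exact hdown _ (Λ.d_s _) _ (hγs j) (KGraph.chainPre_source Λ g hub hch hj)
          exact hdown v hver _ hvγ hconnv
        · intro hvγ
          obtain ⟨j, hj⟩ : v ∈ Set.range f := hf ▸ hvγ
          refine ⟨hvert v hvγ, Λ.d (g (j+1)), ?_⟩
          have e : (Λ.limitPath g hub hch).toFun (Λ.d (g (j+1))) (Λ.d (g (j+1)))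
              = Λ.s (g (j+1)) := by
            have e2 := KGraph.chainFun_diag Λ g hub (Λ.d (g (j+1)))
            rw [KGraph.chainPre_index Λ g hub hch (j+1)] at e2
            exact e2
          rw [e, ← hj]
          exact hq4 j (g j) (hγs j)
      exact Subtype.ext ((hB _).trans htail)

theorem KGraph.cyl_basis {k : ℕ} (Λ : KGraph k) :
    TopologicalSpace.IsTopologicalBasis
      {U : Set Λ.InfinitePath | ∃ mu : Λ.Path, U = Λ.cyl mu} := by
  refine { exists_subset_inter := ?_, sUnion_eq := ?_, eq_generateFrom := rfl }
  · rintro t1 ⟨μ, rfl⟩ t2 ⟨ν, rfl⟩ x ⟨hx1, hx2⟩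
    have hdlam : Λ.d (x.toFun 0 (Λ.d μ ⊔ Λ.d ν)) = Λ.d μ ⊔ Λ.d ν := by
      rw [x.d_eq 0 _ zero_le]; simp
    refine ⟨Λ.cyl (x.toFun 0 (Λ.d μ ⊔ Λ.d ν)), ⟨_, rfl⟩, ?_, ?_⟩
    · show x.toFun 0 (Λ.d (x.toFun 0 (Λ.d μ ⊔ Λ.d ν))) = x.toFun 0 (Λ.d μ ⊔ Λ.d ν)
      rw [hdlam]
    · intro y hy
      have hy' : y.toFun 0 (Λ.d μ ⊔ Λ.d ν) = x.toFun 0 (Λ.d μ ⊔ Λ.d ν) := by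
        have : y.toFun 0 (Λ.d (x.toFun 0 (Λ.d μ ⊔ Λ.d ν))) = x.toFun 0 (Λ.d μ ⊔ Λ.d ν) := hy
        rwa [hdlam] at this
      have key : ∀ m : Fin k → ℕ, m ≤ Λ.d μ ⊔ Λ.d ν → y.toFun 0 m = x.toFun 0 m := by
        intro m hm
        have e1 := Λ.ipath_split y (n := Λ.d μ ⊔ Λ.d ν) hm
        have e2 := Λ.ipath_split x (n := Λ.d μ ⊔ Λ.d ν) hm
        rw [hy', e2] at e1
        exact (congrArg Prod.fst e1).symm
      constructor
      · show y.toFun 0 (Λ.d μ) = μ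
        rw [key (Λ.d μ) le_sup_left]; exact hx1
      · show y.toFun 0 (Λ.d ν) = ν
        rw [key (Λ.d ν) le_sup_right]; exact hx2
  · apply Set.eq_univ_iff_forall.mpr
    intro x
    refine Set.mem_sUnion.mpr ⟨Λ.cyl (x.toFun 0 0), ⟨_, rfl⟩, ?_⟩
    show x.toFun 0 (Λ.d (x.toFun 0 0)) = x.toFun 0 0
    have : Λ.d (x.toFun 0 0) = 0 := by rw [x.d_eq 0 0 le_rfl]; simp
    rw [this]

/-- `β(Z(μ)) = S(s(μ))` for every `μ ∈ Λ`; in particular `β` is an open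
map. -/
theorem stmt13 {k : ℕ} (Λ : KGraph k) (hrf : Λ.RowFinite) (hns : Λ.NoSources)
    (hsa : Λ.StronglyAperiodic) (B : Λ.InfinitePath → Λ.MaxTail)
    (hB : ∀ x, (B x).1 = Λ.tailOf x) :
    (∀ mu : Λ.Path, B '' (Λ.cyl mu) = Λ.Sv (Λ.s mu)) ∧ IsOpenMap B := by
  refine ⟨Λ.image_cyl B hB, ?_⟩
  rw [(Λ.cyl_basis).isOpenMap_iff]
  rintro U ⟨μ, rfl⟩
  rw [Λ.image_cyl B hB μ]
  exact TopologicalSpace.isOpen_generateFrom_of_mem ⟨Λ.s μ, Λ.d_s μ, rfl⟩
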